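/- Let M be a loopless matroid of rank d on ground set E, with independence complex I(M). If M is PS-ear decomposable with h-vector satisfying h_d(I(M)) = k, then for each 0 ≤ i ≤ d one has h_i(I(M)) ≤ C(d,i) + (k−1)·C(d−1,i−1). -/

import Mathlib

open Polynomial Finset

/-- The h-polynomial `h(Δ,t) = ∑_{i=0}^d f_{i-1} t^i (1-t)^{d-i}` of a complex of
dimension `d-1`, written as a sum over faces. -/
noncomputable def hPoly {α : Type*} [DecidableEq α] (d : ℕ) (Δ : Finset (Finset α)) :
    Polynomial ℤ :=
  ∑ F ∈ Δ, X ^ F.card * (1 - X) ^ (d - F.card)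

/-- The join of two complexes. -/
def joinC {α : Type*} [DecidableEq α] (Δ₁ Δ₂ : Finset (Finset α)) : Finset (Finset α) :=
  (Δ₁ ×ˢ Δ₂).image fun p => p.1 ∪ p.2

/-- A PS-sphere: a join of boundaries of simplices. -/
def IsPSSphere {α : Type*} [DecidableEq α] (S : Finset (Finset α)) : Prop :=
  ∃ P : Finset (Finset α), (∀ B ∈ P, 2 ≤ B.card) ∧
    (P : Set (Finset α)).Pairwise Disjoint ∧
    S = (P.sup id).powerset.filter fun F => ∀ B ∈ P, ¬B ⊆ F

/-- `K` is a PS-ball with boundary `B`. -/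
def IsPSBall {α : Type*} [DecidableEq α] (K B : Finset (Finset α)) : Prop :=
  ∃ (S : Finset (Finset α)) (G : Finset α), IsPSSphere S ∧ G.Nonempty ∧
    Disjoint (S.sup id) G ∧ K = joinC S G.powerset ∧ B = joinC S (G.powerset.erase G)

/-- `Δ'` is obtained from `Δ` by attaching a PS-ear. -/
def EarAttach {α : Type*} [DecidableEq α] (Δ Δ' : Finset (Finset α)) : Prop :=
  ∃ K B : Finset (Finset α), IsPSBall K B ∧ K.sup Finset.card = Δ.sup Finset.card ∧
    Δ ∩ K = B ∧ Δ' = Δ ∪ K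

/-- `Δ` is PS-ear decomposable. -/
def PSEarDecomposable {α : Type*} [DecidableEq α] (Δ : Finset (Finset α)) : Prop :=
  ∃ (n : ℕ) (c : ℕ → Finset (Finset α)), IsPSSphere (c 0) ∧
    (∀ j < n, EarAttach (c j) (c (j + 1))) ∧ c n = Δ

/-- The independence complex of a matroid, as a finset of finsets. -/
noncomputable def indepComplex {α : Type*} [DecidableEq α] [Fintype α] (M : Matroid α) :
    Finset (Finset α) := by
  classical exact Finset.univ.filter fun F : Finset α => M.Indep ↑F

/-! ### Auxiliary material -/

namespace PSAux

/-- The geometric sum `1 + X + ⋯ + X^(a-1)`. -/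
noncomputable def geomP (a : ℕ) : Polynomial ℤ := ∑ j ∈ Finset.range a, X ^ j

lemma geomP_coeff (a i : ℕ) : (geomP a).coeff i = if i < a then 1 else 0 := by
  unfold geomP
  rw [finset_sum_coeff]
  simp only [coeff_X_pow]
  rw [Finset.sum_ite_eq (Finset.range a) i (fun _ => (1 : ℤ))]
  simp [Finset.mem_range]

lemma geomP_natDegree (a : ℕ) (ha : 1 ≤ a) : (geomP a).natDegree = a - 1 := by
  apply le_antisymm
  · rw [natDegree_le_iff_coeff_eq_zero]
    intro N hN
    rw [geomP_coeff]
    simp only [ite_eq_right_iff]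
    intro h; omega
  · apply le_natDegree_of_ne_zero
    rw [geomP_coeff]
    simp only [ne_eq, ite_eq_right_iff]
    intro h; exact absurd (h (by omega)) one_ne_zero

lemma geomP_monic (a : ℕ) (ha : 1 ≤ a) : (geomP a).Monic := by
  show (geomP a).leadingCoeff = 1
  rw [leadingCoeff, geomP_natDegree a ha, geomP_coeff]
  simp only [ite_eq_left_iff, not_lt]
  intro h; omega

lemma geomP_coeff_nonneg (a i : ℕ) : 0 ≤ (geomP a).coeff i := by
  rw [geomP_coeff]; split <;> norm_num

lemma coeff_one_add_X_pow (n i : ℕ) : ((1 + X : Polynomial ℤ) ^ n).coeff i = n.choose i := by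
  rw [add_comm, add_pow, finset_sum_coeff]
  have h : ∀ m ∈ Finset.range (n + 1),
      ((X : Polynomial ℤ) ^ m * 1 ^ (n - m) * (n.choose m : Polynomial ℤ)).coeff i
        = if i = m then (n.choose m : ℤ) else 0 := by
    intro m _
    rw [one_pow, mul_one, mul_comm, ← Polynomial.C_eq_natCast, coeff_C_mul, coeff_X_pow]
    split <;> simp
  rw [Finset.sum_congr rfl h]
  rw [Finset.sum_ite_eq (Finset.range (n + 1)) i (fun m => (n.choose m : ℤ))]
  by_cases hi : i < n + 1
  · simp [hi]
  · simp only [Finset.mem_range, hi, if_false]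
    rw [Nat.choose_eq_zero_of_lt (by omega)]
    simp

/-- Splitting the weight of a disjoint union. -/
lemma weight_split (d₁ d₂ : ℕ) (F G : Finset ℕ) : True := trivial

lemma wsplit {α : Type*} [DecidableEq α] (d₁ d₂ : ℕ) (F G : Finset α)
    (hF : F.card ≤ d₁) (hG : G.card ≤ d₂) (h : Disjoint F G) :
    (X : Polynomial ℤ) ^ (F ∪ G).card * (1 - X) ^ (d₁ + d₂ - (F ∪ G).card)
      = (X ^ F.card * (1 - X) ^ (d₁ - F.card)) * (X ^ G.card * (1 - X) ^ (d₂ - G.card)) := by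
  rw [Finset.card_union_of_disjoint h]
  have h1 : d₁ + d₂ - (F.card + G.card) = (d₁ - F.card) + (d₂ - G.card) := by omega
  rw [h1, pow_add, pow_add]
  ring

lemma sum_powerset_one {α : Type*} [DecidableEq α] (B : Finset α) :
    ∑ C ∈ B.powerset, (X : Polynomial ℤ) ^ C.card * (1 - X) ^ (B.card - C.card) = 1 := by
  induction B using Finset.induction_on with
  | empty => simp
  | @insert a s ha ih =>
    rw [Finset.sum_powerset_insert ha]
    have e1 : ∑ C ∈ s.powerset, (X : Polynomial ℤ) ^ C.card * (1 - X) ^ ((insert a s).card - C.card)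
        = (∑ C ∈ s.powerset, (X : Polynomial ℤ) ^ C.card * (1 - X) ^ (s.card - C.card)) * (1 - X) := by
      rw [Finset.sum_mul]
      refine Finset.sum_congr rfl fun C hC => ?_
      have hle : C.card ≤ s.card := Finset.card_le_card (Finset.mem_powerset.mp hC)
      rw [Finset.card_insert_of_notMem ha]
      have h2 : s.card + 1 - C.card = (s.card - C.card) + 1 := by omega
      rw [h2, pow_succ]; ring
    have e2 : ∑ C ∈ s.powerset,
        (X : Polynomial ℤ) ^ (insert a C).card * (1 - X) ^ ((insert a s).card - (insert a C).card)
        = (∑ C ∈ s.powerset, (X : Polynomial ℤ) ^ C.card * (1 - X) ^ (s.card - C.card)) * X := by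
      rw [Finset.sum_mul]
      refine Finset.sum_congr rfl fun C hC => ?_
      have hCs : C ⊆ s := Finset.mem_powerset.mp hC
      have haC : a ∉ C := fun h => ha (hCs h)
      rw [Finset.card_insert_of_notMem haC, Finset.card_insert_of_notMem ha]
      have h2 : s.card + 1 - (C.card + 1) = s.card - C.card := by omega
      rw [h2, pow_succ]; ring
    rw [e1, e2, ← mul_add]
    rw [show (1 - X + X : Polynomial ℤ) = 1 by ring, mul_one, ih]

lemma sum_boundary (B : Finset ℕ) : True := trivial

lemma geom_boundary {α : Type*} [DecidableEq α] (B : Finset α) (hB : 1 ≤ B.card) :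
    ∑ C ∈ B.powerset.erase B, (X : Polynomial ℤ) ^ C.card * (1 - X) ^ (B.card - 1 - C.card)
      = geomP B.card := by
  have hc : (1 - X : Polynomial ℤ) ≠ 0 := by
    intro h
    have := congrArg (fun p : Polynomial ℤ => p.coeff 0) h
    simp at this
  apply mul_left_cancel₀ hc
  rw [Finset.mul_sum]
  have e : ∀ C ∈ B.powerset.erase B,
      (1 - X : Polynomial ℤ) * (X ^ C.card * (1 - X) ^ (B.card - 1 - C.card))
        = X ^ C.card * (1 - X) ^ (B.card - C.card) := by
    intro C hC
    obtain ⟨hne, hsub⟩ := Finset.mem_erase.mp hC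
    have hlt : C.card < B.card :=
      Finset.card_lt_card (lt_of_le_of_ne (Finset.mem_powerset.mp hsub) hne)
    have h2 : B.card - C.card = (B.card - 1 - C.card) + 1 := by omega
    rw [h2, pow_succ]; ring
  rw [Finset.sum_congr rfl e]
  have hsplit : ∑ C ∈ B.powerset.erase B, (X : Polynomial ℤ) ^ C.card * (1 - X) ^ (B.card - C.card)
      = (∑ C ∈ B.powerset, (X : Polynomial ℤ) ^ C.card * (1 - X) ^ (B.card - C.card))
        - X ^ B.card * (1 - X) ^ (B.card - B.card) := by
    rw [← Finset.sum_erase_add _ _ (Finset.mem_powerset_self B)]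
    ring
  rw [hsplit, sum_powerset_one]
  simp only [Nat.sub_self, pow_zero, mul_one]
  unfold geomP
  have hg := geom_sum_mul (X : Polynomial ℤ) B.card
  linear_combination hg

/-- The "partition sphere" complex. -/
def SP {α : Type*} [DecidableEq α] (P : Finset (Finset α)) : Finset (Finset α) :=
  (P.sup id).powerset.filter fun F => ∀ B ∈ P, ¬B ⊆ F

lemma mem_SP {α : Type*} [DecidableEq α] {P : Finset (Finset α)} {F : Finset α} :
    F ∈ SP P ↔ F ⊆ P.sup id ∧ ∀ B ∈ P, ¬B ⊆ F := by
  simp [SP]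

lemma sphere_main {α : Type*} [DecidableEq α] (P : Finset (Finset α)) :
    (∀ B ∈ P, 1 ≤ B.card) → ((P : Set (Finset α)).Pairwise Disjoint) →
    (∀ F ∈ SP P, F.card ≤ ∑ B ∈ P, (B.card - 1)) ∧
    (∃ F ∈ SP P, F.card = ∑ B ∈ P, (B.card - 1)) ∧
    hPoly (∑ B ∈ P, (B.card - 1)) (SP P) = ∏ B ∈ P, geomP B.card := by
  induction P using Finset.induction_on with
  | empty =>
    intro _ _
    have hSP : SP (∅ : Finset (Finset α)) = {∅} := by
      ext F; simp [SP, Finset.subset_empty]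
    refine ⟨?_, ⟨∅, ?_, ?_⟩, ?_⟩
    · intro F hF; rw [hSP] at hF; simp at hF; simp [hF]
    · rw [hSP]; simp
    · simp
    · rw [hSP]; simp [hPoly]
  | @insert B P hBP ih =>
    intro h1 hd
    have hB1 : 1 ≤ B.card := h1 B (Finset.mem_insert_self B P)
    have h1' : ∀ B' ∈ P, 1 ≤ B'.card := fun B' h => h1 B' (Finset.mem_insert_of_mem h)
    have hd' : (P : Set (Finset α)).Pairwise Disjoint :=
      Set.Pairwise.mono (by simp [Finset.coe_insert, Set.subset_insert]) hd
    obtain ⟨ih1, ⟨F₀, hF₀, hF₀c⟩, ih3⟩ := ih h1' hd'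
    have hF₀V : F₀ ⊆ P.sup id := (mem_SP.mp hF₀).1
    -- B is disjoint from the old vertex set
    have hdisjBV : Disjoint B (P.sup id) := by
      rw [Finset.disjoint_left]
      intro x hxB hxV
      obtain ⟨B', hB', hxB'⟩ := Finset.mem_sup.mp hxV
      have hne : B ≠ B' := fun h => hBP (h ▸ hB')
      exact Finset.disjoint_left.mp
        (hd (by simp) (by simp [hB']) hne) hxB hxB'
    -- decomposition of the sphere on `insert B P`
    have hSPeq : SP (insert B P)
        = Finset.image (fun p : Finset α × Finset α => p.1 ∪ p.2)
            ((B.powerset.erase B) ×ˢ SP P) := by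
      ext F
      simp only [mem_SP, Finset.sup_insert, Finset.sup_eq_union, id_eq, Finset.mem_image,
        Finset.mem_product, Finset.mem_erase, Finset.mem_powerset, Prod.exists]
      constructor
      · rintro ⟨hsub, hnb⟩
        refine ⟨F ∩ B, F \ B, ⟨⟨?_, Finset.inter_subset_right⟩, ?_⟩, ?_⟩
        · intro h
          exact hnb B (Finset.mem_insert_self B P) (Finset.inter_eq_right.mp h)
        · constructor
          · intro x hx
            obtain ⟨hxF, hxB⟩ := Finset.mem_sdiff.mp hx
            rcases Finset.mem_union.mp (hsub hxF) with h | h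
            · exact absurd h hxB
            · exact h
          · intro B' hB' hsubB'
            exact hnb B' (Finset.mem_insert_of_mem hB')
              (hsubB'.trans Finset.sdiff_subset)
        · ext x
          simp only [Finset.mem_union, Finset.mem_inter, Finset.mem_sdiff]
          tauto
      · rintro ⟨C, F₁, ⟨⟨hCne, hCB⟩, hF₁⟩, rfl⟩
        obtain ⟨hF₁V, hF₁P⟩ := hF₁
        constructor
        · exact Finset.union_subset_union hCB hF₁V
        · intro B' hB' hsubB'
          rcases Finset.mem_insert.mp hB' with rfl | hB'P
          · have hBC : B' ⊆ C := by
              intro x hx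
              rcases Finset.mem_union.mp (hsubB' hx) with h | h
              · exact h
              · exact absurd (hF₁V h) (Finset.disjoint_left.mp hdisjBV hx)
            exact hCne (le_antisymm hCB hBC)
          · have hdisjBB' : Disjoint B B' := by
              have hne : B ≠ B' := fun h => hBP (h ▸ hB'P)
              exact hd (by simp) (by simp [hB'P]) hne
            have hB'F₁ : B' ⊆ F₁ := by
              intro x hx
              rcases Finset.mem_union.mp (hsubB' hx) with h | h
              · exact absurd hx (Finset.disjoint_left.mp hdisjBB' (hCB h))
              · exact h
            exact hF₁P B' hB'P hB'F₁
    -- injectivity of the union map on the product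
    have hinj : ∀ p ∈ (B.powerset.erase B) ×ˢ SP P, ∀ q ∈ (B.powerset.erase B) ×ˢ SP P,
        p.1 ∪ p.2 = q.1 ∪ q.2 → p = q := by
      rintro ⟨C, F₁⟩ hp ⟨C', F₁'⟩ hq h
      simp only [Finset.mem_product, Finset.mem_erase, Finset.mem_powerset] at hp hq
      obtain ⟨⟨_, hCB⟩, hF₁⟩ := hp
      obtain ⟨⟨_, hC'B⟩, hF₁'⟩ := hq
      have hF₁V : F₁ ⊆ P.sup id := (mem_SP.mp hF₁).1
      have hF₁'V : F₁' ⊆ P.sup id := (mem_SP.mp hF₁').1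
      have key : ∀ (C₀ F₂ : Finset α), C₀ ⊆ B → F₂ ⊆ P.sup id →
          (C₀ ∪ F₂) ∩ B = C₀ ∧ (C₀ ∪ F₂) \ B = F₂ := by
        intro C₀ F₂ hC₀ hF₂
        constructor
        · ext x
          simp only [Finset.mem_inter, Finset.mem_union]
          constructor
          · rintro ⟨h | h, hxB⟩
            · exact h
            · exact absurd hxB (Finset.disjoint_right.mp hdisjBV (hF₂ h))
          · intro h; exact ⟨Or.inl h, hC₀ h⟩
        · ext x
          simp only [Finset.mem_sdiff, Finset.mem_union]
          constructor
          · rintro ⟨h | h, hxB⟩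
            · exact absurd (hC₀ h) hxB
            · exact h
          · intro h
            exact ⟨Or.inr h, Finset.disjoint_right.mp hdisjBV (hF₂ h)⟩
      obtain ⟨k1, k2⟩ := key C F₁ hCB hF₁V
      obtain ⟨k1', k2'⟩ := key C' F₁' hC'B hF₁'V
      have hC : C = C' := by rw [← k1, ← k1', h]
      have hF : F₁ = F₁' := by rw [← k2, ← k2', h]
      simp [hC, hF]
    have hsum : ∑ B' ∈ insert B P, (B'.card - 1) = (B.card - 1) + ∑ B' ∈ P, (B'.card - 1) :=
      Finset.sum_insert hBP
    -- facts about cards of elements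
    have hcard_mem : ∀ C ∈ B.powerset.erase B, ∀ F₁ ∈ SP P,
        Disjoint C F₁ ∧ C.card ≤ B.card - 1 := by
      intro C hC F₁ hF₁
      obtain ⟨hne, hsub⟩ := Finset.mem_erase.mp hC
      have hCB := Finset.mem_powerset.mp hsub
      have hF₁V : F₁ ⊆ P.sup id := (mem_SP.mp hF₁).1
      constructor
      · exact Finset.disjoint_of_subset_left hCB
          (Finset.disjoint_of_subset_right hF₁V hdisjBV)
      · have := Finset.card_lt_card (lt_of_le_of_ne hCB hne)
        omega
    refine ⟨?_, ?_, ?_⟩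
    · -- card bound
      intro F hF
      rw [hSPeq] at hF
      obtain ⟨⟨C, F₁⟩, hp, rfl⟩ := Finset.mem_image.mp hF
      simp only [Finset.mem_product] at hp
      dsimp only
      obtain ⟨hdisj, hCle⟩ := hcard_mem C hp.1 F₁ hp.2
      have h5 := Finset.card_union_le C F₁
      have h6 := ih1 F₁ hp.2
      rw [hsum]; omega
    · -- existence of a top face
      obtain ⟨b, hb⟩ := Finset.card_pos.mp (by omega : 0 < B.card)
      have hCmem : B.erase b ∈ B.powerset.erase B := by
        rw [Finset.mem_erase, Finset.mem_powerset]
        refine ⟨?_, Finset.erase_subset b B⟩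
        intro h
        have := Finset.card_erase_of_mem hb
        rw [h] at this; omega
      refine ⟨B.erase b ∪ F₀, ?_, ?_⟩
      · rw [hSPeq]
        exact Finset.mem_image.mpr ⟨(B.erase b, F₀), Finset.mem_product.mpr ⟨hCmem, hF₀⟩, rfl⟩
      · obtain ⟨hdisj, _⟩ := hcard_mem _ hCmem F₀ hF₀
        rw [Finset.card_union_of_disjoint hdisj, Finset.card_erase_of_mem hb, hsum, hF₀c]
    · -- the h-polynomial product formula
      rw [hsum, hPoly, hSPeq, Finset.sum_image hinj, Finset.sum_product]
      rw [Finset.prod_insert hBP, ← ih3, ← geom_boundary B hB1, hPoly, Finset.sum_mul_sum]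
      refine Finset.sum_congr rfl fun C hC => Finset.sum_congr rfl fun F₁ hF₁ => ?_
      obtain ⟨hdisj, hCle⟩ := hcard_mem C hC F₁ hF₁
      exact wsplit (B.card - 1) (∑ B' ∈ P, (B'.card - 1)) C F₁ hCle (ih1 F₁ hF₁) hdisj

lemma coeff_mul_le (p q r s : Polynomial ℤ) (hp : ∀ i, 0 ≤ p.coeff i) (hr : ∀ i, 0 ≤ r.coeff i)
    (hpq : ∀ i, p.coeff i ≤ q.coeff i) (hrs : ∀ i, r.coeff i ≤ s.coeff i) (i : ℕ) :
    (p * r).coeff i ≤ (q * s).coeff i := by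
  rw [coeff_mul, coeff_mul]
  apply Finset.sum_le_sum
  intro x _
  exact mul_le_mul (hpq _) (hrs _) (hr _) (le_trans (hp _) (hpq _))

lemma prod_geomP_coeff_le {α : Type*} [DecidableEq α] (P : Finset (Finset α)) :
    (∀ B ∈ P, 1 ≤ B.card) →
    ∀ i, 0 ≤ (∏ B ∈ P, geomP B.card).coeff i ∧
      (∏ B ∈ P, geomP B.card).coeff i
        ≤ ((∑ B ∈ P, (B.card - 1)).choose i : ℤ) := by
  induction P using Finset.induction_on with
  | empty => intro _ i; simp [coeff_one]; split <;> simp_all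
  | @insert B P hBP ih =>
    intro h1 i
    have hB1 : 1 ≤ B.card := h1 B (Finset.mem_insert_self B P)
    have h1' : ∀ B' ∈ P, 1 ≤ B'.card := fun B' h => h1 B' (Finset.mem_insert_of_mem h)
    have ihh := ih h1'
    rw [Finset.prod_insert hBP, Finset.sum_insert hBP]
    constructor
    · rw [coeff_mul]
      apply Finset.sum_nonneg
      intro x _
      exact mul_nonneg (geomP_coeff_nonneg _ _) ((ihh _).1)
    · have hle : (geomP B.card * ∏ B' ∈ P, geomP B'.card).coeff i
          ≤ ((1 + X : Polynomial ℤ) ^ (B.card - 1) *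
              (1 + X) ^ (∑ B' ∈ P, (B'.card - 1))).coeff i := by
        apply coeff_mul_le
        · exact fun j => geomP_coeff_nonneg _ _
        · exact fun j => (ihh j).1
        · intro j
          rw [geomP_coeff, coeff_one_add_X_pow]
          split
          · exact_mod_cast Nat.one_le_iff_ne_zero.mpr
              (Nat.choose_pos (by omega : j ≤ B.card - 1)).ne'
          · positivity
        · intro j
          rw [coeff_one_add_X_pow]
          exact (ihh j).2
      calc (geomP B.card * ∏ B' ∈ P, geomP B'.card).coeff i
          ≤ ((1 + X : Polynomial ℤ) ^ (B.card - 1) *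
              (1 + X) ^ (∑ B' ∈ P, (B'.card - 1))).coeff i := hle
        _ = ((B.card - 1 + ∑ B' ∈ P, (B'.card - 1)).choose i : ℤ) := by
            rw [← pow_add, coeff_one_add_X_pow]

lemma prod_geomP_coeff_top {α : Type*} [DecidableEq α] (P : Finset (Finset α))
    (h1 : ∀ B ∈ P, 1 ≤ B.card) :
    (∏ B ∈ P, geomP B.card).coeff (∑ B ∈ P, (B.card - 1)) = 1 := by
  have hm : ∀ B ∈ P, (geomP B.card).Monic := fun B hB => geomP_monic _ (h1 B hB)
  have hMon := Polynomial.monic_prod_of_monic P _ hm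
  have hdeg : (∏ B ∈ P, geomP B.card).natDegree = ∑ B ∈ P, (B.card - 1) := by
    rw [Polynomial.natDegree_prod _ _ (fun B hB => (hm B hB).ne_zero)]
    exact Finset.sum_congr rfl fun B hB => geomP_natDegree _ (h1 B hB)
  rw [← hdeg]
  exact hMon.coeff_natDegree

lemma choose_le_choose_add (n m a : ℕ) : n.choose m ≤ (n + a).choose (m + a) := by
  induction a with
  | zero => simp
  | succ a ih =>
    calc n.choose m ≤ (n + a).choose (m + a) := ih
      _ ≤ (n + a + 1).choose (m + a + 1) := by
          rw [Nat.choose_succ_succ]; exact Nat.le_add_right _ _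

/-- The key structure extracted from an ear attachment. -/
lemma ear_step {α : Type*} [DecidableEq α] (Δ Δ' : Finset (Finset α)) (d : ℕ)
    (hdΔ : Δ.sup Finset.card = d) (h : EarAttach Δ Δ') :
    Δ'.sup Finset.card = d ∧
    ∃ g : ℕ, 1 ≤ g ∧ g ≤ d ∧ ∃ hS : Polynomial ℤ,
      hPoly d Δ' = hPoly d Δ + X ^ g * hS ∧
      (∀ i, 0 ≤ hS.coeff i) ∧ (∀ i, hS.coeff i ≤ ((d - g).choose i : ℤ)) ∧
      hS.coeff (d - g) = 1 := by
  classical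
  obtain ⟨K, Bd, ⟨S, G, ⟨P, hP1, hP2, rfl⟩, hG, hdisj, hK, hBd⟩, hsupK, hΔK, rfl⟩ := h
  set g := G.card with hg
  have hg1 : 1 ≤ g := Finset.card_pos.mpr hG
  have h1 : ∀ B ∈ P, 1 ≤ B.card := fun B hB => le_trans one_le_two (hP1 B hB)
  obtain ⟨sp1, ⟨F₀, hF₀, hF₀c⟩, sp3⟩ := sphere_main P h1 hP2
  set D := ∑ B ∈ P, (B.card - 1) with hD
  -- each face is disjoint from G
  have hfaceG : ∀ F ∈ SP P, Disjoint F G := by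
    intro F hF
    exact Finset.disjoint_of_subset_left (Finset.le_sup (f := id) hF) hdisj
  -- K's membership description
  have hmemK : ∀ F, F ∈ K ↔ ∃ F₁ ∈ SP P, ∃ H ⊆ G, F = F₁ ∪ H := by
    intro F
    rw [hK]
    simp only [joinC, Finset.mem_image, Finset.mem_product, Prod.exists, Finset.mem_powerset]
    constructor
    · rintro ⟨F₁, H, ⟨h₁, h₂⟩, rfl⟩; exact ⟨F₁, h₁, H, h₂, rfl⟩
    · rintro ⟨F₁, h₁, H, h₂, rfl⟩; exact ⟨F₁, H, ⟨h₁, h₂⟩, rfl⟩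
  have hmemBd : ∀ F, F ∈ Bd ↔ ∃ F₁ ∈ SP P, ∃ H, (H ⊆ G ∧ H ≠ G) ∧ F = F₁ ∪ H := by
    intro F
    rw [hBd]
    simp only [joinC, Finset.mem_image, Finset.mem_product, Prod.exists, Finset.mem_erase,
      Finset.mem_powerset]
    constructor
    · rintro ⟨F₁, H, ⟨h₁, hne, h₂⟩, rfl⟩; exact ⟨F₁, h₁, H, ⟨h₂, hne⟩, rfl⟩
    · rintro ⟨F₁, h₁, H, ⟨h₂, hne⟩, rfl⟩; exact ⟨F₁, H, ⟨h₁, hne, h₂⟩, rfl⟩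
  -- sup of K
  have hsupK' : K.sup Finset.card = D + g := by
    apply le_antisymm
    · apply Finset.sup_le
      intro F hF
      obtain ⟨F₁, h₁, H, h₂, rfl⟩ := (hmemK F).mp hF
      calc (F₁ ∪ H).card ≤ F₁.card + H.card := Finset.card_union_le _ _
        _ ≤ D + g := add_le_add (sp1 F₁ h₁) (Finset.card_le_card h₂)
    · have hmem : F₀ ∪ G ∈ K := (hmemK _).mpr ⟨F₀, hF₀, G, subset_rfl, rfl⟩
      have : (F₀ ∪ G).card = D + g := by
        rw [Finset.card_union_of_disjoint (hfaceG F₀ hF₀), hF₀c]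
      exact this ▸ Finset.le_sup hmem
  have hDg : D + g = d := by rw [← hsupK', hsupK, hdΔ]
  have hgd : g ≤ d := by omega
  have hDdg : D = d - g := by omega
  -- Bd ⊆ K
  have hBdK : Bd ⊆ K := hΔK ▸ Finset.inter_subset_right
  -- K \ Bd = image (· ∪ G) (SP P)
  have hKBd : K \ Bd = Finset.image (fun F => F ∪ G) (SP P) := by
    ext F
    simp only [Finset.mem_sdiff, Finset.mem_image]
    constructor
    · rintro ⟨hFK, hFBd⟩
      obtain ⟨F₁, h₁, H, h₂, rfl⟩ := (hmemK F).mp hFK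
      by_cases hHG : H = G
      · exact ⟨F₁, h₁, by rw [hHG]⟩
      · exact absurd ((hmemBd _).mpr ⟨F₁, h₁, H, ⟨h₂, hHG⟩, rfl⟩) hFBd
    · rintro ⟨F₁, h₁, rfl⟩
      refine ⟨(hmemK _).mpr ⟨F₁, h₁, G, subset_rfl, rfl⟩, ?_⟩
      intro hmem
      obtain ⟨F₂, h₂, H, ⟨hHG, hHne⟩, heq⟩ := (hmemBd _).mp hmem
      apply hHne
      have e1 : (F₁ ∪ G) ∩ G = G :=
        Finset.inter_eq_right.mpr Finset.subset_union_right
      have e2 : (F₂ ∪ H) ∩ G = H := by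
        ext x
        simp only [Finset.mem_inter, Finset.mem_union]
        constructor
        · rintro ⟨h1 | h1, h2⟩
          · exact absurd h2 (Finset.disjoint_left.mp (hfaceG F₂ h₂) h1)
          · exact h1
        · intro hx
          exact ⟨Or.inr hx, hHG hx⟩
      rw [← e2, ← heq, e1]
  have hinjG : ∀ F₁ ∈ SP P, ∀ F₂ ∈ SP P, F₁ ∪ G = F₂ ∪ G → F₁ = F₂ := by
    intro F₁ h₁ F₂ h₂ h
    have e : ∀ F₃ ∈ SP P, (F₃ ∪ G) \ G = F₃ := by
      intro F₃ h₃
      rw [Finset.union_sdiff_right, Finset.sdiff_eq_self_of_disjoint (hfaceG F₃ h₃)]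
    rw [← e F₁ h₁, ← e F₂ h₂, h]
  refine ⟨?_, g, hg1, hgd, hPoly D (SP P), ?_, ?_, ?_, ?_⟩
  · rw [Finset.sup_union, hdΔ, hsupK, hdΔ, sup_idem]
  · -- the h-polynomial identity
    have key1 : hPoly d (Δ ∪ K) + hPoly d Bd = hPoly d Δ + hPoly d K := by
      rw [← hΔK]; exact Finset.sum_union_inter
    have key2 : hPoly d K = hPoly d Bd + ∑ F ∈ K \ Bd, X ^ F.card * (1 - X) ^ (d - F.card) := by
      have hs := Finset.sum_sdiff
        (f := fun F : Finset α => (X : Polynomial ℤ) ^ F.card * (1 - X) ^ (d - F.card)) hBdK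
      rw [hPoly, hPoly, ← hs]; ring
    have key3 : ∑ F ∈ K \ Bd, (X : Polynomial ℤ) ^ F.card * (1 - X) ^ (d - F.card)
        = X ^ g * hPoly D (SP P) := by
      rw [hKBd, Finset.sum_image hinjG, hPoly, Finset.mul_sum]
      refine Finset.sum_congr rfl fun F hF => ?_
      have hcard : (F ∪ G).card = F.card + g :=
        Finset.card_union_of_disjoint (hfaceG F hF)
      have hFle : F.card ≤ D := sp1 F hF
      have hexp : d - (F.card + g) = D - F.card := by omega
      rw [hcard, hexp, pow_add]
      ring
    rw [← key3]
    linear_combination key1 + key2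
  · intro i; rw [sp3]; exact (prod_geomP_coeff_le P h1 i).1
  · intro i; rw [sp3, ← hDdg]; exact (prod_geomP_coeff_le P h1 i).2
  · rw [← hDdg, sp3]; exact prod_geomP_coeff_top P h1

end PSAux

open PSAux in
/-- For a loopless matroid of rank `d` whose (PS-ear decomposable) independence complex
has `h_d = k`, each `h_i` is at most `C(d,i) + (k-1)·C(d-1,i-1)`. -/
theorem h_indepComplex_le {α : Type*} [DecidableEq α] [Fintype α] (M : Matroid α)
    (d k : ℕ) (hloopless : ∀ a ∈ M.E, M.Indep {a})
    (hrank : ∃ B : Finset α, M.IsBase ↑B ∧ B.card = d)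
    (hdec : PSEarDecomposable (indepComplex M))
    (hk : (hPoly d (indepComplex M)).coeff d = k) :
    ∀ i ≤ d, (hPoly d (indepComplex M)).coeff i ≤
      (d.choose i : ℤ) + ((k : ℤ) - 1) * ((d - 1).choose (i - 1) : ℤ) := by
  classical
  -- the independence complex has top face cardinality d
  have hsupd : (indepComplex M).sup Finset.card = d := by
    obtain ⟨B0, hB0, hB0c⟩ := hrank
    apply le_antisymm
    · apply Finset.sup_le
      intro F hF
      have hFi : M.Indep ↑F := by simpa [indepComplex] using hF
      obtain ⟨B', hB', hFB'⟩ := hFi.exists_isBase_superset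
      have h1 : (↑F : Set α).encard ≤ B'.encard := Set.encard_le_encard hFB'
      rw [hB'.encard_eq_encard_of_isBase hB0, Set.encard_coe_eq_coe_finsetCard,
        Set.encard_coe_eq_coe_finsetCard, hB0c] at h1
      exact_mod_cast h1
    · have hmem : B0 ∈ indepComplex M := by
        simp [indepComplex, hB0.indep]
      exact hB0c ▸ Finset.le_sup hmem
  obtain ⟨n, c, hc0, hstep, hcn⟩ := hdec
  -- the top cardinality is constant along the chain
  have hsupstep : ∀ j < n, (c (j + 1)).sup Finset.card = (c j).sup Finset.card := by
    intro j hj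
    obtain ⟨K, Bd, _, hsupK, _, hU⟩ := hstep j hj
    rw [hU, Finset.sup_union, hsupK, sup_idem]
  have hconst : ∀ j ≤ n, (c j).sup Finset.card = (c 0).sup Finset.card := by
    intro j hj
    induction j with
    | zero => rfl
    | succ j ih => rw [hsupstep j (by omega)]; exact ih (by omega)
  have hsupall : ∀ j ≤ n, (c j).sup Finset.card = d := by
    intro j hj
    rw [hconst j hj, ← hconst n le_rfl, hcn, hsupd]
  -- main induction along the chain
  have key : ∀ j ≤ n, (hPoly d (c j)).coeff d = (j : ℤ) + 1 ∧
      ∀ i, (hPoly d (c j)).coeff i ≤ (d.choose i : ℤ) + j * ((d - 1).choose (i - 1) : ℤ) := by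
    intro j hj
    induction j with
    | zero =>
      obtain ⟨P, hP1, hP2, hc0eq⟩ := hc0
      have h1 : ∀ B ∈ P, 1 ≤ B.card := fun B hB => le_trans one_le_two (hP1 B hB)
      obtain ⟨sp1, ⟨F₀, hF₀, hF₀c⟩, sp3⟩ := sphere_main P h1 hP2
      have hc0SP : c 0 = SP P := hc0eq
      have hDd : ∑ B ∈ P, (B.card - 1) = d := by
        have hs : (SP P).sup Finset.card = ∑ B ∈ P, (B.card - 1) := by
          apply le_antisymm
          · exact Finset.sup_le sp1
          · exact hF₀c ▸ Finset.le_sup hF₀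
        rw [← hs, ← hc0SP]
        exact hsupall 0 (Nat.zero_le n)
      rw [hc0SP, ← hDd, sp3]
      constructor
      · exact_mod_cast prod_geomP_coeff_top P h1
      · intro i
        have := (prod_geomP_coeff_le P h1 i).2
        push_cast
        have h2 : ((d - 1).choose (i - 1) : ℤ) ≥ 0 := by positivity
        calc (∏ B ∈ P, geomP B.card).coeff i ≤ ((∑ B ∈ P, (B.card - 1)).choose i : ℤ) := this
          _ ≤ _ := by rw [hDd]; nlinarith [h2]
    | succ j ih =>
      obtain ⟨ih1, ih2⟩ := ih (by omega)
      obtain ⟨_, g, hg1, hgd, hS, heq, hSnn, hSle, hStop⟩ :=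
        ear_step (c j) (c (j + 1)) d (hsupall j (by omega)) (hstep j (by omega))
      rw [heq]
      constructor
      · rw [coeff_add, ih1]
        have : (X ^ g * hS).coeff d = 1 := by
          have hd' : d = (d - g) + g := by omega
          rw [hd', Polynomial.coeff_X_pow_mul, hStop]
        rw [this]; push_cast; ring
      · intro i
        rw [coeff_add]
        have hXgS : (X ^ g * hS).coeff i ≤ ((d - 1).choose (i - 1) : ℤ) := by
          rcases le_or_gt g i with hgi | hgi
          · have hi' : i = (i - g) + g := by omega
            have hcoeff : (X ^ g * hS).coeff i = hS.coeff (i - g) := by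
              conv_lhs => rw [hi']
              rw [Polynomial.coeff_X_pow_mul]
            rw [hcoeff]
            calc hS.coeff (i - g) ≤ ((d - g).choose (i - g) : ℤ) := hSle _
              _ ≤ ((d - 1).choose (i - 1) : ℤ) := by
                  have := choose_le_choose_add (d - g) (i - g) (g - 1)
                  have e1 : d - g + (g - 1) = d - 1 := by omega
                  have e2 : i - g + (g - 1) = i - 1 := by omega
                  rw [e1, e2] at this
                  exact_mod_cast this
          · rw [mul_comm, Polynomial.coeff_mul_X_pow']
            simp only [not_le.mpr hgi, if_false]
            positivity
        calc (hPoly d (c j)).coeff i + (X ^ g * hS).coeff i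
            ≤ ((d.choose i : ℤ) + j * ((d - 1).choose (i - 1) : ℤ))
              + ((d - 1).choose (i - 1) : ℤ) := add_le_add (ih2 i) hXgS
          _ = (d.choose i : ℤ) + (j + 1 : ℕ) * ((d - 1).choose (i - 1) : ℤ) := by
              push_cast; ring
  obtain ⟨htop, hbound⟩ := key n le_rfl
  rw [hcn] at htop hbound
  have hkn : (k : ℤ) = (n : ℤ) + 1 := by rw [← hk, htop]
  intro i _
  calc (hPoly d (indepComplex M)).coeff i
      ≤ (d.choose i : ℤ) + n * ((d - 1).choose (i - 1) : ℤ) := hbound i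
    _ = (d.choose i : ℤ) + ((k : ℤ) - 1) * ((d - 1).choose (i - 1) : ℤ) := by
        rw [hkn]; ring
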